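/- Fix real numbers δ > 0, c ∈ (0, 1), σ > 0, and f ∈ ℝ, and define k: ℝ → ℝ by k(τ) = δ·[(1 − c + (3/4)c²) + (c − c²)·cos(2πf τ) + (c²/4)·cos(4πf τ)]·exp(−|τ|/σ). Then k is a positive semidefinite kernel: for every positive integer n and all t_1, …, t_n ∈ ℝ, the n×n matrix with (i, j) entry k(t_i − t_j) is symmetric positive semidefinite. -/

import Mathlib

open Matrix MeasureTheory Finset

/-- The min kernel `min (a i) (a j)` with nonnegative `a` has nonnegative quadratic form:
it equals an integral of a square. -/
lemma min_kernel_qf_nonneg {n : ℕ} (a y : Fin n → ℝ) (ha : ∀ i, 0 ≤ a i) :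
    0 ≤ ∑ i, ∑ j, y i * y j * min (a i) (a j) := by
  set g : Fin n → ℝ → ℝ := fun i u => y i * (Set.Ioc (0:ℝ) (a i)).indicator (fun _ => (1:ℝ)) u
    with hg
  have hprod : ∀ (i j : Fin n) (u : ℝ), g i u * g j u
      = y i * y j * (Set.Ioc (0:ℝ) (min (a i) (a j))).indicator (fun _ => (1:ℝ)) u := by
    intro i j u
    simp only [hg]
    rw [show y i * (Set.Ioc (0:ℝ) (a i)).indicator (fun _ => (1:ℝ)) u *
        (y j * (Set.Ioc (0:ℝ) (a j)).indicator (fun _ => (1:ℝ)) u)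
        = y i * y j * ((Set.Ioc (0:ℝ) (a i)).indicator (fun _ => (1:ℝ)) u *
          (Set.Ioc (0:ℝ) (a j)).indicator (fun _ => (1:ℝ)) u) from by ring]
    rw [← Set.inter_indicator_mul]
    congr 1
    simp [Set.Ioc_inter_Ioc]
  have hInt : ∀ i j : Fin n, Integrable (fun u => g i u * g j u) := by
    intro i j
    simp_rw [hprod i j]
    apply Integrable.const_mul
    rw [integrable_indicator_iff measurableSet_Ioc]
    exact integrableOn_const (by simp [Real.volume_Ioc])
  have key : ∑ i, ∑ j, y i * y j * min (a i) (a j)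
      = ∫ u, (∑ i, g i u) ^ 2 := by
    have hsq : ∀ u : ℝ, (∑ i, g i u) ^ 2 = ∑ i, ∑ j, g i u * g j u := by
      intro u
      rw [sq, Finset.sum_mul_sum]
    rw [MeasureTheory.integral_congr_ae (Filter.Eventually.of_forall hsq)]
    rw [MeasureTheory.integral_finset_sum _ (fun i _ => integrable_finset_sum _
      (fun j _ => hInt i j))]
    refine Finset.sum_congr rfl fun i _ => ?_
    rw [MeasureTheory.integral_finset_sum _ (fun j _ => hInt i j)]
    refine Finset.sum_congr rfl fun j _ => ?_
    simp_rw [hprod i j]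
    rw [MeasureTheory.integral_const_mul,
      MeasureTheory.integral_indicator_const _ measurableSet_Ioc, Real.volume_real_Ioc]
    have hmn : (0:ℝ) ≤ min (a i) (a j) := le_min (ha i) (ha j)
    simp [ENNReal.toReal_ofReal, hmn]
  rw [key]
  exact integral_nonneg fun u => sq_nonneg _

/-- Quadratic form of the product of a rank-one feature kernel `v i * v j`
with the Laplacian kernel `exp (-|s - t| / σ)` is nonnegative. -/
lemma feature_exp_qf_nonneg {n : ℕ} {σ : ℝ} (hσ : 0 < σ) (t x v : Fin n → ℝ) :
    0 ≤ ∑ i, ∑ j, x i * x j * (v i * v j) * Real.exp (-|t i - t j| / σ) := by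
  set a : Fin n → ℝ := fun i => Real.exp (2 * t i / σ) with haa
  set y : Fin n → ℝ := fun i => x i * v i * Real.exp (-(t i) / σ) with hyy
  have key : ∀ i j, x i * x j * (v i * v j) * Real.exp (-|t i - t j| / σ)
      = y i * y j * min (a i) (a j) := by
    intro i j
    have hmin : min (a i) (a j) = Real.exp (2 * min (t i) (t j) / σ) := by
      rcases le_total (t i) (t j) with h | h
      · rw [min_eq_left h, min_eq_left]
        simp only [haa]
        exact Real.exp_le_exp.mpr ((div_le_div_iff_of_pos_right hσ).mpr (by linarith))
      · rw [min_eq_right h, min_eq_right]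
        simp only [haa]
        exact Real.exp_le_exp.mpr ((div_le_div_iff_of_pos_right hσ).mpr (by linarith))
    rw [hmin]
    simp only [hyy]
    rw [show x i * v i * Real.exp (-(t i) / σ) * (x j * v j * Real.exp (-(t j) / σ)) *
        Real.exp (2 * min (t i) (t j) / σ)
        = x i * x j * (v i * v j) * (Real.exp (-(t i) / σ) * Real.exp (-(t j) / σ) *
          Real.exp (2 * min (t i) (t j) / σ)) from by ring]
    congr 1
    rw [← Real.exp_add, ← Real.exp_add]
    congr 1
    rcases le_total (t i) (t j) with h | h
    · rw [min_eq_left h, abs_of_nonpos (by linarith)]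
      field_simp
      ring
    · rw [min_eq_right h, abs_of_nonneg (by linarith)]
      field_simp
      ring
  calc (0:ℝ) ≤ ∑ i, ∑ j, y i * y j * min (a i) (a j) :=
        min_kernel_qf_nonneg a y (fun i => (Real.exp_pos _).le)
    _ = ∑ i, ∑ j, x i * x j * (v i * v j) * Real.exp (-|t i - t j| / σ) := by
        exact Finset.sum_congr rfl fun i _ => Finset.sum_congr rfl fun j _ => (key i j).symm

/-- The designed temporal kernel
`k(τ) = δ [(1 - c + (3/4)c²) + (c - c²) cos(2πf τ) + (c²/4) cos(4πf τ)] e^{-|τ|/σ}`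
with `δ > 0`, `c ∈ (0,1)`, `σ > 0`, `f ∈ ℝ` is a positive semidefinite kernel: every
Gram matrix `[k(t_i - t_j)]` is symmetric positive semidefinite. -/
theorem designed_temporal_kernel_posSemidef
    (δ c σ f : ℝ) (hδ : 0 < δ) (hc : c ∈ Set.Ioo (0 : ℝ) 1) (hσ : 0 < σ)
    (k : ℝ → ℝ)
    (hk : ∀ τ : ℝ, k τ =
      δ * ((1 - c + (3 / 4) * c ^ 2)
            + (c - c ^ 2) * Real.cos (2 * Real.pi * f * τ)
            + (c ^ 2 / 4) * Real.cos (4 * Real.pi * f * τ))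
        * Real.exp (-|τ| / σ)) :
    ∀ (n : ℕ), 0 < n → ∀ t : Fin n → ℝ,
      (Matrix.of fun i j : Fin n => k (t i - t j)).PosSemidef := by
  obtain ⟨hc0, hc1⟩ := hc
  intro n _ t
  have hkeven : ∀ τ : ℝ, k (-τ) = k τ := by
    intro τ
    rw [hk, hk]
    simp [abs_neg, mul_neg, Real.cos_neg]
  rw [Matrix.posSemidef_iff_dotProduct_mulVec]
  constructor
  · ext i j
    simp only [Matrix.conjTranspose_apply, Matrix.of_apply, star_trivial]
    rw [show t j - t i = -(t i - t j) from by ring, hkeven]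
  · intro x
    simp only [star_trivial, dotProduct, Matrix.mulVec, Matrix.of_apply]
    -- goal: 0 ≤ ∑ i, x i * ∑ j, k (t i - t j) * x j
    have hA : (0:ℝ) ≤ 1 - c + (3 / 4) * c ^ 2 := by nlinarith
    have hB : (0:ℝ) ≤ c - c ^ 2 := by nlinarith
    have hC : (0:ℝ) ≤ c ^ 2 / 4 := by positivity
    have E : ∀ i j : Fin n, Real.exp (-|t i - t j| / σ) = Real.exp (-|t i - t j| / σ) :=
      fun _ _ => rfl
    have expand : ∀ i j : Fin n, x i * (k (t i - t j) * x j)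
        = δ * (1 - c + (3 / 4) * c ^ 2) *
            (x i * x j * ((1:ℝ) * (1:ℝ)) * Real.exp (-|t i - t j| / σ))
          + δ * (c - c ^ 2) *
            (x i * x j * (Real.cos (2 * Real.pi * f * t i) * Real.cos (2 * Real.pi * f * t j))
               * Real.exp (-|t i - t j| / σ))
          + δ * (c - c ^ 2) *
            (x i * x j * (Real.sin (2 * Real.pi * f * t i) * Real.sin (2 * Real.pi * f * t j))
               * Real.exp (-|t i - t j| / σ))
          + δ * (c ^ 2 / 4) *
            (x i * x j * (Real.cos (4 * Real.pi * f * t i) * Real.cos (4 * Real.pi * f * t j))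
               * Real.exp (-|t i - t j| / σ))
          + δ * (c ^ 2 / 4) *
            (x i * x j * (Real.sin (4 * Real.pi * f * t i) * Real.sin (4 * Real.pi * f * t j))
               * Real.exp (-|t i - t j| / σ)) := by
      intro i j
      rw [hk, show 2 * Real.pi * f * (t i - t j)
            = 2 * Real.pi * f * t i - 2 * Real.pi * f * t j from by ring,
          show 4 * Real.pi * f * (t i - t j)
            = 4 * Real.pi * f * t i - 4 * Real.pi * f * t j from by ring,
          Real.cos_sub, Real.cos_sub]
      ring
    have hsum : ∑ i, x i * ∑ j, k (t i - t j) * x j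
        = δ * (1 - c + (3 / 4) * c ^ 2) *
            (∑ i, ∑ j, x i * x j * ((fun _ : Fin n => (1:ℝ)) i * (fun _ : Fin n => (1:ℝ)) j)
              * Real.exp (-|t i - t j| / σ))
          + δ * (c - c ^ 2) *
            (∑ i, ∑ j, x i * x j * ((fun i => Real.cos (2 * Real.pi * f * t i)) i
              * (fun i => Real.cos (2 * Real.pi * f * t i)) j) * Real.exp (-|t i - t j| / σ))
          + δ * (c - c ^ 2) *
            (∑ i, ∑ j, x i * x j * ((fun i => Real.sin (2 * Real.pi * f * t i)) i
              * (fun i => Real.sin (2 * Real.pi * f * t i)) j) * Real.exp (-|t i - t j| / σ))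
          + δ * (c ^ 2 / 4) *
            (∑ i, ∑ j, x i * x j * ((fun i => Real.cos (4 * Real.pi * f * t i)) i
              * (fun i => Real.cos (4 * Real.pi * f * t i)) j) * Real.exp (-|t i - t j| / σ))
          + δ * (c ^ 2 / 4) *
            (∑ i, ∑ j, x i * x j * ((fun i => Real.sin (4 * Real.pi * f * t i)) i
              * (fun i => Real.sin (4 * Real.pi * f * t i)) j) * Real.exp (-|t i - t j| / σ)) := by
      simp only [Finset.mul_sum]
      rw [← Finset.sum_add_distrib, ← Finset.sum_add_distrib, ← Finset.sum_add_distrib,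
        ← Finset.sum_add_distrib]
      refine Finset.sum_congr rfl fun i _ => ?_
      rw [← Finset.sum_add_distrib, ← Finset.sum_add_distrib, ← Finset.sum_add_distrib,
        ← Finset.sum_add_distrib]
      refine Finset.sum_congr rfl fun j _ => ?_
      simpa using expand i j
    rw [hsum]
    have h1 := feature_exp_qf_nonneg hσ t x (fun _ => (1:ℝ))
    have h2 := feature_exp_qf_nonneg hσ t x (fun i => Real.cos (2 * Real.pi * f * t i))
    have h3 := feature_exp_qf_nonneg hσ t x (fun i => Real.sin (2 * Real.pi * f * t i))
    have h4 := feature_exp_qf_nonneg hσ t x (fun i => Real.cos (4 * Real.pi * f * t i))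
    have h5 := feature_exp_qf_nonneg hσ t x (fun i => Real.sin (4 * Real.pi * f * t i))
    exact add_nonneg (add_nonneg (add_nonneg (add_nonneg
      (mul_nonneg (mul_nonneg hδ.le hA) h1) (mul_nonneg (mul_nonneg hδ.le hB) h2))
      (mul_nonneg (mul_nonneg hδ.le hB) h3)) (mul_nonneg (mul_nonneg hδ.le hC) h4))
      (mul_nonneg (mul_nonneg hδ.le hC) h5)
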